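/- Let H be an inner product space over ℂ, n ≥ 1, x₁,…,xₙ, y₁,…,yₙ ∈ H, p a probability vector, and a, b ∈ H. Then |∑ᵢ pᵢ⟨xᵢ, yᵢ⟩ − ⟨∑ᵢ pᵢ xᵢ, ∑ᵢ pᵢ yᵢ⟩|² ≤ (∑ᵢ pᵢ‖xᵢ − a‖² − ‖∑ᵢ pᵢ xᵢ − a‖²) · (∑ᵢ pᵢ‖yᵢ − b‖² − ‖∑ᵢ pᵢ yᵢ − b‖²). -/

import Mathlib

open scoped InnerProductSpace
open Finset

lemma gruss_expand {H : Type*} [NormedAddCommGroup H] [InnerProductSpace ℂ H]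
    {n : ℕ} (x y : Fin n → H) (p : Fin n → ℝ) (hsum : ∑ i, p i = 1) :
    ∑ i, (p i : ℂ) * ⟪x i, y i⟫_ℂ - ⟪∑ i, (p i : ℂ) • x i, ∑ i, (p i : ℂ) • y i⟫_ℂ
      = ∑ i, ∑ j, ((p i * p j / 2 : ℝ) : ℂ) * ⟪x i - x j, y i - y j⟫_ℂ := by
  have hC : (∑ i, (p i : ℂ)) = 1 := by norm_cast
  have key : ⟪∑ i, (p i : ℂ) • x i, ∑ i, (p i : ℂ) • y i⟫_ℂ
      = ∑ i, ∑ j, (p i : ℂ) * (p j : ℂ) * ⟪x i, y j⟫_ℂ := by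
    rw [sum_inner]
    refine Finset.sum_congr rfl fun i _ => ?_
    rw [inner_sum]
    refine Finset.sum_congr rfl fun j _ => ?_
    rw [inner_smul_left, inner_smul_right, Complex.conj_ofReal]; ring
  have hA : ∑ i, ∑ j, (p i : ℂ) * (p j : ℂ) * ⟪x i, y i⟫_ℂ
      = ∑ i, (p i : ℂ) * ⟪x i, y i⟫_ℂ := by
    refine Finset.sum_congr rfl fun i _ => ?_
    calc ∑ j, (p i : ℂ) * (p j : ℂ) * ⟪x i, y i⟫_ℂ
        = (∑ j, (p j : ℂ)) * ((p i : ℂ) * ⟪x i, y i⟫_ℂ) := by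
          rw [Finset.sum_mul]; exact Finset.sum_congr rfl fun j _ => by ring
      _ = (p i : ℂ) * ⟪x i, y i⟫_ℂ := by rw [hC, one_mul]
  have hB : ∑ i, ∑ j, (p i : ℂ) * (p j : ℂ) * ⟪x j, y j⟫_ℂ
      = ∑ j, (p j : ℂ) * ⟪x j, y j⟫_ℂ := by
    rw [Finset.sum_comm]
    refine Finset.sum_congr rfl fun j _ => ?_
    calc ∑ i, (p i : ℂ) * (p j : ℂ) * ⟪x j, y j⟫_ℂ
        = (∑ i, (p i : ℂ)) * ((p j : ℂ) * ⟪x j, y j⟫_ℂ) := by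
          rw [Finset.sum_mul]; exact Finset.sum_congr rfl fun i _ => by ring
      _ = (p j : ℂ) * ⟪x j, y j⟫_ℂ := by rw [hC, one_mul]
  have hD : ∑ i, ∑ j, (p i : ℂ) * (p j : ℂ) * ⟪x j, y i⟫_ℂ
      = ∑ i, ∑ j, (p i : ℂ) * (p j : ℂ) * ⟪x i, y j⟫_ℂ := by
    rw [Finset.sum_comm]
    exact Finset.sum_congr rfl fun i _ => Finset.sum_congr rfl fun j _ => by ring
  calc ∑ i, (p i : ℂ) * ⟪x i, y i⟫_ℂ - ⟪∑ i, (p i : ℂ) • x i, ∑ i, (p i : ℂ) • y i⟫_ℂ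
      = ((∑ i, ∑ j, (p i : ℂ) * (p j : ℂ) * ⟪x i, y i⟫_ℂ)
        + (∑ i, ∑ j, (p i : ℂ) * (p j : ℂ) * ⟪x j, y j⟫_ℂ)
        - (∑ i, ∑ j, (p i : ℂ) * (p j : ℂ) * ⟪x i, y j⟫_ℂ)
        - (∑ i, ∑ j, (p i : ℂ) * (p j : ℂ) * ⟪x j, y i⟫_ℂ)) / 2 := by
        rw [hA, hB, key, hD]; ring
    _ = ∑ i, ∑ j, ((p i * p j / 2 : ℝ) : ℂ) * ⟪x i - x j, y i - y j⟫_ℂ := by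
        rw [← Finset.sum_add_distrib, ← Finset.sum_sub_distrib, ← Finset.sum_sub_distrib,
          Finset.sum_div]
        refine Finset.sum_congr rfl fun i _ => ?_
        rw [← Finset.sum_add_distrib, ← Finset.sum_sub_distrib, ← Finset.sum_sub_distrib,
          Finset.sum_div]
        refine Finset.sum_congr rfl fun j _ => ?_
        simp only [inner_sub_left, inner_sub_right]
        push_cast; ring

lemma gruss_norm {H : Type*} [NormedAddCommGroup H] [InnerProductSpace ℂ H]
    {n : ℕ} (x : Fin n → H) (p : Fin n → ℝ) (hsum : ∑ i, p i = 1) :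
    ∑ i, p i * ‖x i‖ ^ 2 - ‖∑ i, (p i : ℂ) • x i‖ ^ 2
      = ∑ i, ∑ j, (p i * p j / 2) * ‖x i - x j‖ ^ 2 := by
  have h := gruss_expand x x p hsum
  simp only [inner_self_eq_norm_sq_to_K] at h
  have h' : ∑ i, (p i : ℂ) * ((‖x i‖ : ℝ) : ℂ) ^ 2 - ((‖∑ i, (p i : ℂ) • x i‖ : ℝ) : ℂ) ^ 2
      = ∑ i, ∑ j, ((p i * p j / 2 : ℝ) : ℂ) * ((‖x i - x j‖ : ℝ) : ℂ) ^ 2 := h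
  exact_mod_cast h'

theorem gruss_cauchy_schwarz {H : Type*} [NormedAddCommGroup H] [InnerProductSpace ℂ H]
    (n : ℕ) (hn : 1 ≤ n) (x y : Fin n → H) (p : Fin n → ℝ)
    (hp : ∀ i, 0 ≤ p i) (hsum : ∑ i, p i = 1) (a b : H) :
    ‖∑ i, (p i : ℂ) * ⟪x i, y i⟫_ℂ
        - ⟪∑ i, (p i : ℂ) • x i, ∑ i, (p i : ℂ) • y i⟫_ℂ‖ ^ 2
      ≤ (∑ i, p i * ‖x i - a‖ ^ 2 - ‖(∑ i, (p i : ℂ) • x i) - a‖ ^ 2)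
        * (∑ i, p i * ‖y i - b‖ ^ 2 - ‖(∑ i, (p i : ℂ) • y i) - b‖ ^ 2) := by
  have hC : (∑ i, (p i : ℂ)) = 1 := by norm_cast
  have hpq : ∀ i j : Fin n, 0 ≤ p i * p j / 2 := fun i j => div_nonneg (mul_nonneg (hp i) (hp j)) (by norm_num)
  -- translation of sums
  have hx' : ∑ i, (p i : ℂ) • (x i - a) = (∑ i, (p i : ℂ) • x i) - a := by
    simp only [smul_sub, Finset.sum_sub_distrib, ← Finset.sum_smul, hC, one_smul]
  have hy' : ∑ i, (p i : ℂ) • (y i - b) = (∑ i, (p i : ℂ) • y i) - b := by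
    simp only [smul_sub, Finset.sum_sub_distrib, ← Finset.sum_smul, hC, one_smul]
  -- right-hand factors as double sums
  have hX : ∑ i, p i * ‖x i - a‖ ^ 2 - ‖(∑ i, (p i : ℂ) • x i) - a‖ ^ 2
      = ∑ i, ∑ j, (p i * p j / 2) * ‖x i - x j‖ ^ 2 := by
    rw [← hx', gruss_norm (fun i => x i - a) p hsum]
    exact Finset.sum_congr rfl fun i _ => Finset.sum_congr rfl fun j _ => by
      rw [sub_sub_sub_cancel_right]
  have hY : ∑ i, p i * ‖y i - b‖ ^ 2 - ‖(∑ i, (p i : ℂ) • y i) - b‖ ^ 2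
      = ∑ i, ∑ j, (p i * p j / 2) * ‖y i - y j‖ ^ 2 := by
    rw [← hy', gruss_norm (fun i => y i - b) p hsum]
    exact Finset.sum_congr rfl fun i _ => Finset.sum_congr rfl fun j _ => by
      rw [sub_sub_sub_cancel_right]
  -- vectors in PiLp 2
  let E := PiLp 2 (fun _ : Fin n × Fin n => H)
  let u : E := WithLp.toLp 2 fun ij : Fin n × Fin n => ((Real.sqrt (p ij.1 * p ij.2 / 2) : ℝ) : ℂ) • (x ij.1 - x ij.2)
  let v : E := WithLp.toLp 2 fun ij : Fin n × Fin n => ((Real.sqrt (p ij.1 * p ij.2 / 2) : ℝ) : ℂ) • (y ij.1 - y ij.2)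
  have hin : ⟪u, v⟫_ℂ = ∑ i, ∑ j, ((p i * p j / 2 : ℝ) : ℂ) * ⟪x i - x j, y i - y j⟫_ℂ := by
    rw [PiLp.inner_apply, Fintype.sum_prod_type]
    refine Finset.sum_congr rfl fun i _ => Finset.sum_congr rfl fun j _ => ?_
    rw [PiLp.toLp_apply, PiLp.toLp_apply, inner_smul_left, inner_smul_right, Complex.conj_ofReal, ← mul_assoc,
      ← Complex.ofReal_mul, Real.mul_self_sqrt (hpq i j)]
  have hnu : ‖u‖ ^ 2 = ∑ i, ∑ j, (p i * p j / 2) * ‖x i - x j‖ ^ 2 := by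
    rw [PiLp.norm_sq_eq_of_L2, Fintype.sum_prod_type]
    refine Finset.sum_congr rfl fun i _ => Finset.sum_congr rfl fun j _ => ?_
    rw [PiLp.toLp_apply, norm_smul, mul_pow, Complex.norm_real, Real.norm_eq_abs, abs_of_nonneg (Real.sqrt_nonneg _),
      Real.sq_sqrt (hpq i j)]
  have hnv : ‖v‖ ^ 2 = ∑ i, ∑ j, (p i * p j / 2) * ‖y i - y j‖ ^ 2 := by
    rw [PiLp.norm_sq_eq_of_L2, Fintype.sum_prod_type]
    refine Finset.sum_congr rfl fun i _ => Finset.sum_congr rfl fun j _ => ?_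
    rw [PiLp.toLp_apply, norm_smul, mul_pow, Complex.norm_real, Real.norm_eq_abs, abs_of_nonneg (Real.sqrt_nonneg _),
      Real.sq_sqrt (hpq i j)]
  rw [hX, hY, ← hnu, ← hnv, gruss_expand x y p hsum, ← hin]
  calc ‖⟪u, v⟫_ℂ‖ ^ 2 = ‖⟪u, v⟫_ℂ‖ ^ 2 := rfl
    _ ≤ (‖u‖ * ‖v‖) ^ 2 := by
        exact pow_le_pow_left₀ (norm_nonneg _) (norm_inner_le_norm u v) 2
    _ = ‖u‖ ^ 2 * ‖v‖ ^ 2 := by ring
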